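/- Let B be a Boolean algebra, k ≥ 1 and μ a cardinal. Suppose there is a sequence ⟨x_i : i < ℶ_{2k}(μ)^+⟩ in B such that for all i₀ < i₁ < … < i_{2k-1} < ℶ_{2k}(μ)^+ the element ⋀_{l<k} x_{i_{2l}} ∧ (-x_{i_{2l+1}}) is nonzero. Then there is a sequence ⟨y_j : j < μ^+⟩ in B such that for every w ∈ [μ^+]^k there is an ultrafilter D on B with: for all j < μ^+, y_j ∈ D iff j ∈ w. -/

import Mathlib

open Cardinal

universe u

/-- The ultrafilter lemma: any nonzero element of a Boolean algebra is sent to `true`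
by some bounded lattice homomorphism to `Bool`. -/
theorem exists_boolHom {B : Type u} [BooleanAlgebra B] (b : B) (hb : b ≠ ⊥) :
    ∃ D : BoundedLatticeHom B Bool, D b = true := by
  classical
  have hdisj : Disjoint ((Order.PFilter.principal b : Order.PFilter B) : Set B)
      ((Order.Ideal.principal (⊥ : B) : Order.Ideal B) : Set B) := by
    rw [Set.disjoint_left]
    rintro z hz hz'
    have h1 : b ≤ z := by simpa using hz
    have h2 : z ≤ ⊥ := Order.Ideal.mem_principal.mp hz'
    exact hb (le_antisymm (h1.trans h2) bot_le)
  obtain ⟨J, hJp, hIJ, hFJ⟩ := DistribLattice.prime_ideal_of_disjoint_filter_ideal hdisj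
  have hbot : (⊥ : B) ∈ J := Order.Ideal.principal_le_iff.mp hIJ
  have htop : (⊤ : B) ∉ J := by
    intro h
    exact Set.disjoint_left.mp hFJ (by simp : (⊤ : B) ∈ (Order.PFilter.principal b : Order.PFilter B)) h
  have hbJ : b ∉ J := by
    intro h
    exact Set.disjoint_left.mp hFJ (by simp : b ∈ (Order.PFilter.principal b : Order.PFilter B)) h
  have hsup : ∀ u v : B, u ⊔ v ∈ J ↔ (u ∈ J ∧ v ∈ J) :=
    fun u v => ⟨fun h => ⟨J.lower le_sup_left h, J.lower le_sup_right h⟩,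
      fun ⟨h1, h2⟩ => J.sup_mem h1 h2⟩
  have hinf : ∀ u v : B, u ⊓ v ∈ J ↔ (u ∈ J ∨ v ∈ J) :=
    fun u v => ⟨fun h => hJp.mem_or_mem h,
      fun h => h.elim (fun h' => J.lower inf_le_left h') fun h' => J.lower inf_le_right h'⟩
  have hbool : ∀ p q : Bool, p ⊔ q = (p || q) ∧ p ⊓ q = (p && q) := fun _ _ => ⟨rfl, rfl⟩
  refine ⟨⟨⟨⟨fun a => decide (a ∉ J), ?_⟩, ?_⟩, ?_, ?_⟩, by simp [hbJ]⟩
  · intro u v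
    by_cases h1 : u ∈ J <;> by_cases h2 : v ∈ J <;>
      simp [hsup, (hbool _ _).1, h1, h2]
  · intro u v
    by_cases h1 : u ∈ J <;> by_cases h2 : v ∈ J <;>
      simp [hinf, (hbool _ _).2, h1, h2]
  · simp [htop]
  · simp [hbot]

/-- Complement rule for Bool-valued homs. -/
theorem boolHom_compl {B : Type u} [BooleanAlgebra B] (D : BoundedLatticeHom B Bool) (a : B) :
    D aᶜ = !(D a) := by
  have h1 : D (a ⊓ aᶜ) = D a ⊓ D aᶜ := map_inf D a aᶜ
  have h2 : D (a ⊔ aᶜ) = D a ⊔ D aᶜ := map_sup D a aᶜ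
  rw [inf_compl_eq_bot, map_bot] at h1
  rw [sup_compl_eq_top, map_top] at h2
  cases ha : D a <;> cases hb : D aᶜ <;> rw [ha, hb] at h1 h2 <;>
    revert h1 h2 <;> decide

/-- Monotonicity. -/
theorem boolHom_mono {B : Type u} [BooleanAlgebra B] (D : BoundedLatticeHom B Bool) {a b : B}
    (h : a ≤ b) (ha : D a = true) : D b = true := by
  have h1 : a ⊓ b = a := inf_eq_left.2 h
  have h3 : D (a ⊓ b) = D a ⊓ D b := map_inf D a b
  rw [h1, ha] at h3
  cases hb : D b
  · rw [hb] at h3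
    exact absurd h3 (by decide)
  · rfl


/-- Delete position `m`: the increasing enumeration of `Fin (N+1) \ {m}`. -/
def delFun {N : ℕ} (m : Fin (N + 1)) (i : Fin N) : Fin (N + 1) :=
  if h : i.1 < m.1 then ⟨i.1, by omega⟩ else ⟨i.1 + 1, by omega⟩

/-- Insert the value `z` at position `m₀` into the tuple `q`. -/
def insFun {β : Type u} {N : ℕ} (m₀ : Fin (N + 1)) (z : β) (q : Fin N → β) :
    Fin (N + 1) → β := fun m =>
  if h : m.1 < m₀.1 then q ⟨m.1, by omega⟩
  else if h' : m.1 = m₀.1 then z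
  else q ⟨m.1 - 1, by omega⟩

theorem insFun_delFun' {β : Type u} {N : ℕ} (m₀ : Fin (N + 1)) (z : β) (q : Fin N → β)
    (i : Fin N) : insFun m₀ z q (delFun m₀ i) = q i := by
  unfold insFun delFun
  by_cases h : i.1 < m₀.1
  · rw [dif_pos h]
    have : ((⟨i.1, by omega⟩ : Fin (N+1))).1 < m₀.1 := h
    rw [dif_pos this]
  · rw [dif_neg h]
    have h1 : ¬ ((⟨i.1 + 1, by omega⟩ : Fin (N+1))).1 < m₀.1 := by simp; omega
    have h2 : ¬ ((⟨i.1 + 1, by omega⟩ : Fin (N+1))).1 = m₀.1 := by simp; omega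
    rw [dif_neg h1, dif_neg h2]
    exact congrArg q (Fin.ext (by simp))

theorem insFun_same {β : Type u} {N : ℕ} (m₀ : Fin (N + 1)) (z : β) (q : Fin N → β) :
    insFun m₀ z q m₀ = z := by
  unfold insFun
  rw [dif_neg (by omega), dif_pos rfl]

theorem insFun_strictMono {β : Type u} [LinearOrder β] {N : ℕ} {m₀ : Fin (N + 1)} {z : β}
    {q : Fin N → β} (hq : StrictMono q) (hz : ∀ i : Fin N, q i < z ↔ i.1 < m₀.1)
    (hz' : ∀ i : Fin N, q i ≠ z) : StrictMono (insFun m₀ z q) := by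
  intro i j hij
  have hij' : i.1 < j.1 := hij
  have hi := i.2
  have hj := j.2
  unfold insFun
  have key : ∀ (a b : ℕ) (ha : a < N) (hb : b < N), a < b → q ⟨a, ha⟩ < q ⟨b, hb⟩ :=
    fun a b ha hb h => hq (show (⟨a, ha⟩ : Fin N) < ⟨b, hb⟩ from h)
  have keyz : ∀ a : Fin N, ¬ a.1 < m₀.1 → z < q a := fun a h =>
    lt_of_le_of_ne (not_lt.mp fun hlt => h ((hz a).mp hlt)) (Ne.symm (hz' a))
  split_ifs with h1 h2 h3 h4 h5 h6 h7 <;> try omega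
  · exact key _ _ _ _ (by omega)
  · exact (hz ⟨i.1, by omega⟩).mpr (show i.1 < m₀.1 by omega)
  · exact key _ _ _ _ (by omega)
  · exact keyz ⟨j.1 - 1, by omega⟩ (by simp; omega)
  · exact key _ _ _ _ (by omega)

/-- A downward closed set in `Fin N` is an initial segment of length its cardinality. -/
theorem downclosed_card {N : ℕ} (P : Fin N → Prop) [DecidablePred P]
    (hdc : ∀ i j : Fin N, i.1 ≤ j.1 → P j → P i) (i : Fin N) :
    P i ↔ i.1 < (Finset.univ.filter P).card := by
  constructor
  · intro hPi
    have hsub : Finset.Iic i ⊆ Finset.univ.filter P := by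
      intro j hj
      simp only [Finset.mem_Iic] at hj
      exact Finset.mem_filter.mpr ⟨Finset.mem_univ _, hdc j i hj hPi⟩
    have := Finset.card_le_card hsub
    rw [Fin.card_Iic] at this
    omega
  · intro hcard
    by_contra hPi
    have hsub : Finset.univ.filter P ⊆ Finset.Iio i := by
      intro j hj
      simp only [Finset.mem_filter] at hj
      simp only [Finset.mem_Iio]
      rcases lt_or_ge j i with h | h
      · exact h
      · exact absurd (hdc i j h hj.2) hPi
    have := Finset.card_le_card hsub
    rw [Fin.card_Iio] at this
    omega


/-- Iterated beth function starting at `μ`: `ℶ_0(μ) = μ`, `ℶ_{m+1}(μ) = 2^{ℶ_m(μ)}`. -/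
def bethIter (μ : Cardinal.{u}) : ℕ → Cardinal.{u}
  | 0 => μ
  | m + 1 => 2 ^ bethIter μ m

theorem le_bethIter (μ : Cardinal.{u}) (n : ℕ) : μ ≤ bethIter μ n := by
  induction n with
  | zero => exact le_rfl
  | succ m ih => exact ih.trans (cantor _).le

theorem exists_strictMono_toType {β : Type u} [LinearOrder β] [WellFoundedLT β]
    {o : Ordinal.{u}} (h : o ≤ Ordinal.type ((· < ·) : β → β → Prop)) :
    ∃ g : o.ToType → β, StrictMono g := by
  haveI h1 : IsWellOrder o.ToType (· < · : o.ToType → o.ToType → Prop) := isWellOrder_lt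
  haveI h2 : IsWellOrder β (· < · : β → β → Prop) := isWellOrder_lt
  rw [← Ordinal.type_toType o] at h
  obtain ⟨emb⟩ := (@Ordinal.type_le_iff' o.ToType β (· < ·) (· < ·) h1 h2).1 h
  exact ⟨emb, fun x y hxy => emb.map_rel_iff.2 hxy⟩

/-- In the `toType` of the ordinal of a regular cardinal, small sets are strictly bounded. -/
theorem exists_strict_bound {c : Cardinal.{u}} (hc : ℵ₀ ≤ c) (M : Set (Order.succ c).ord.ToType)
    (hM : #M ≤ c) : ∃ astar, ∀ m ∈ M, m < astar := by
  classical
  set ψ := Ordinal.ToType.mk (o := (Order.succ c).ord) with hψ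
  have hlim : Order.IsSuccLimit ((Order.succ c).ord) := Cardinal.isSuccLimit_ord (hc.trans (Order.le_succ c))
  have hsup : (⨆ m : M, Order.succ ((ψ.symm m.1).1)) < (Order.succ c).ord := by
    apply Ordinal.iSup_lt_ord
    · rw [(Cardinal.isRegular_succ hc).cof_eq]
      exact hM.trans_lt (Order.lt_succ c)
    · intro m
      exact hlim.succ_lt (ψ.symm m.1).2
  refine ⟨ψ ⟨_, hsup⟩, ?_⟩
  intro m hm
  have h1 : (ψ.symm m).1 < ⨆ m : M, Order.succ ((ψ.symm m.1).1) :=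
    lt_of_lt_of_le (Order.lt_succ _) (Ordinal.le_iSup (fun m : M => Order.succ ((ψ.symm m.1).1)) ⟨m, hm⟩)
  have h2 : ψ.symm m < (⟨_, hsup⟩ : Set.Iio (Order.succ c).ord) := h1
  have := ψ.strictMono h2
  rwa [OrderIso.apply_symm_apply] at this

/-- Core construction: an end-homogeneous sequence of length `ν⁺` inside `(2^ν)⁺`. -/
theorem exists_endHomog (μ ν : Cardinal.{u}) (hμ : ℵ₀ ≤ μ) (hν : ℵ₀ ≤ ν) (hμν : μ ≤ ν)
    (n : ℕ) (C : Type u) (hC : #C ≤ μ)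
    (f : (Fin (n + 2) → (Order.succ ((2 : Cardinal.{u}) ^ ν)).ord.ToType) → C) :
    ∃ (a : (Order.succ ν).ord.ToType → (Order.succ ((2 : Cardinal.{u}) ^ ν)).ord.ToType)
      (astar : (Order.succ ((2 : Cardinal.{u}) ^ ν)).ord.ToType), StrictMono a ∧
      ∀ (ξ : (Order.succ ν).ord.ToType) (v : Fin (n + 1) → ↥(Set.Iio ξ)),
        f (Fin.snoc (fun i => a (v i).1) (a ξ)) = f (Fin.snoc (fun i => a (v i).1) astar) := by
  classical
  have hlcinf : ℵ₀ ≤ (2 : Cardinal.{u}) ^ ν := hν.trans (cantor ν).le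
  have hνlc : ν ≤ (2 : Cardinal.{u}) ^ ν := (cantor ν).le
  haveI hTne : Nonempty ((Order.succ ((2 : Cardinal.{u}) ^ ν)).ord.ToType) :=
    Ordinal.nonempty_toType_iff.2
      (by simpa using ((aleph0_pos.trans_le hlcinf).trans_le (Order.le_succ _)).ne')
  haveI hIne : Nonempty ν.ord.ToType := Ordinal.nonempty_toType_iff.2
    (by simpa using (aleph0_pos.trans_le hν).ne')
  have a₀ : (Order.succ ((2 : Cardinal.{u}) ^ ν)).ord.ToType := Classical.arbitrary _
  -- the type of an element over an enumerated set
  set TP : (ν.ord.ToType → (Order.succ ((2 : Cardinal.{u}) ^ ν)).ord.ToType) →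
      (Order.succ ((2 : Cardinal.{u}) ^ ν)).ord.ToType →
      ((Fin (n + 1) → ν.ord.ToType) → C) × (ν.ord.ToType → Bool) := fun e b =>
    (fun v => f (Fin.snoc (fun i => e (v i)) b), fun i => decide (e i < b)) with hTP
  set wfn : (ν.ord.ToType → (Order.succ ((2 : Cardinal.{u}) ^ ν)).ord.ToType) →
      (Order.succ ((2 : Cardinal.{u}) ^ ν)).ord.ToType →
      (Order.succ ((2 : Cardinal.{u}) ^ ν)).ord.ToType :=
    fun e a => Function.invFun (TP e) (TP e a) with hwfndef
  have hwfn : ∀ e a, TP e (wfn e a) = TP e a := fun e a => Function.invFun_eq ⟨a, rfl⟩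
  set step : Set ((Order.succ ((2 : Cardinal.{u}) ^ ν)).ord.ToType) →
      Set ((Order.succ ((2 : Cardinal.{u}) ^ ν)).ord.ToType) := fun P =>
    insert a₀ (P ∪ ⋃ e : {e : ν.ord.ToType → (Order.succ ((2 : Cardinal.{u}) ^ ν)).ord.ToType //
      ∀ i, e i ∈ P}, Set.range (wfn e.1)) with hstep
  -- the closure chain
  set Mo : Ordinal.{u} → Set ((Order.succ ((2 : Cardinal.{u}) ^ ν)).ord.ToType) :=
    Ordinal.lt_wf.fix
      (fun i rec => ⋃ t : i.ToType,
        step (rec ((Ordinal.ToType.mk (o := i)).symm t).1 ((Ordinal.ToType.mk (o := i)).symm t).2))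
      with hModef
  have hMo : ∀ i, Mo i = ⋃ t : i.ToType, step (Mo ((Ordinal.ToType.mk (o := i)).symm t).1) :=
    fun i => WellFounded.fix_eq _ _ i
  have hstepMo : ∀ {o i : Ordinal.{u}}, o < i → step (Mo o) ⊆ Mo i := by
    intro o i h x hx
    rw [hMo]
    exact Set.mem_iUnion.2 ⟨Ordinal.ToType.mk (o := i) ⟨o, h⟩, by rwa [OrderIso.symm_apply_apply]⟩
  have hMoMono : ∀ {i i' : Ordinal.{u}}, i ≤ i' → Mo i ⊆ Mo i' := by
    intro i i' h x hx
    rw [hMo] at hx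
    obtain ⟨t, ht⟩ := Set.mem_iUnion.mp hx
    exact hstepMo (((Ordinal.ToType.mk (o := i)).symm t).2.trans_le h) ht
  -- cardinality bounds
  have hIcard : #ν.ord.ToType = ν := by rw [Cardinal.mk_toType, Cardinal.card_ord]
  have hppow : ((2 : Cardinal.{u}) ^ ν) ^ ν = (2 : Cardinal.{u}) ^ ν := by
    rw [← Cardinal.power_mul, Cardinal.mul_eq_self hν]
  have hTPcard : #(((Fin (n + 1) → ν.ord.ToType) → C) × (ν.ord.ToType → Bool)) ≤
      (2 : Cardinal.{u}) ^ ν := by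
    have hX : #(Fin (n + 1) → ν.ord.ToType) = ν := by
      rw [Cardinal.mk_arrow]
      simp [hIcard]
      norm_cast
      exact Cardinal.power_nat_eq hν (by omega)
    have h2 : #((Fin (n + 1) → ν.ord.ToType) → C) ≤ (2 : Cardinal.{u}) ^ ν := by
      rw [← Cardinal.power_def, hX]
      calc #C ^ ν ≤ ((2 : Cardinal.{u}) ^ ν) ^ ν :=
            Cardinal.power_le_power_right (hC.trans (hμν.trans hνlc))
        _ = (2 : Cardinal.{u}) ^ ν := hppow
    have h3 : #(ν.ord.ToType → Bool) ≤ (2 : Cardinal.{u}) ^ ν := by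
      rw [Cardinal.mk_arrow]
      simp [hIcard]
    rw [Cardinal.mk_prod, Cardinal.lift_id, Cardinal.lift_id]
    exact (mul_le_mul' h2 h3).trans (Cardinal.mul_eq_self hlcinf).le
  have hstepcard : ∀ P : Set ((Order.succ ((2 : Cardinal.{u}) ^ ν)).ord.ToType),
      Cardinal.mk P ≤ (2 : Cardinal.{u}) ^ ν → #(step P) ≤ (2 : Cardinal.{u}) ^ ν := by
    intro P hP
    have hEs : #{e : ν.ord.ToType → (Order.succ ((2 : Cardinal.{u}) ^ ν)).ord.ToType //
        ∀ i, e i ∈ P} ≤ (2 : Cardinal.{u}) ^ ν := by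
      have hinj : Function.Injective
          (fun (e : {e : ν.ord.ToType → (Order.succ ((2 : Cardinal.{u}) ^ ν)).ord.ToType //
            ∀ i, e i ∈ P}) => (fun i => (⟨e.1 i, e.2 i⟩ : ↥P))) := by
        intro e1 e2 h
        exact Subtype.ext (funext fun i => congrArg Subtype.val (congrFun h i))
      refine (Cardinal.mk_le_of_injective hinj).trans ?_
      rw [← Cardinal.power_def, hIcard]
      calc #↥P ^ ν ≤ ((2 : Cardinal.{u}) ^ ν) ^ ν := Cardinal.power_le_power_right hP
        _ = (2 : Cardinal.{u}) ^ ν := hppow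
    have hrange : ∀ e : {e : ν.ord.ToType → (Order.succ ((2 : Cardinal.{u}) ^ ν)).ord.ToType //
        ∀ i, e i ∈ P}, #(Set.range (wfn e.1)) ≤ (2 : Cardinal.{u}) ^ ν := by
      intro e
      have hsub : Set.range (wfn e.1) ⊆ Set.range (Function.invFun (TP e.1)) := by
        rintro x ⟨b0, rfl⟩
        exact ⟨TP e.1 b0, rfl⟩
      exact (Cardinal.mk_le_mk_of_subset hsub).trans (Cardinal.mk_range_le.trans hTPcard)
    rw [hstep]
    refine le_trans (Cardinal.mk_insert_le) (le_trans (add_le_add_left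
      (Cardinal.mk_union_le _ _) 1) ?_)
    have hU : #(⋃ e : {e : ν.ord.ToType → (Order.succ ((2 : Cardinal.{u}) ^ ν)).ord.ToType //
        ∀ i, e i ∈ P}, Set.range (wfn e.1)) ≤ (2 : Cardinal.{u}) ^ ν := by
      refine le_trans mk_iUnion_le_sum_mk (le_trans
        (Cardinal.sum_le_sum _ (fun _ => (2 : Cardinal.{u}) ^ ν) hrange) ?_)
      rw [Cardinal.sum_const']
      exact (mul_le_mul' hEs le_rfl).trans (Cardinal.mul_eq_self hlcinf).le
    calc #↥P + #↥(⋃ e : {e : ν.ord.ToType → (Order.succ ((2 : Cardinal.{u}) ^ ν)).ord.ToType //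
            ∀ i, e i ∈ P}, Set.range (wfn e.1)) + 1
        ≤ (2 : Cardinal.{u}) ^ ν + (2 : Cardinal.{u}) ^ ν + 1 :=
          add_le_add (add_le_add hP hU) le_rfl
      _ ≤ (2 : Cardinal.{u}) ^ ν + (2 : Cardinal.{u}) ^ ν + (2 : Cardinal.{u}) ^ ν :=
          add_le_add le_rfl (one_le_aleph0.trans hlcinf)
      _ = (2 : Cardinal.{u}) ^ ν := by
          rw [Cardinal.add_eq_self hlcinf, Cardinal.add_eq_self hlcinf]
  have hMocard : ∀ i : Ordinal.{u}, i.card ≤ (2 : Cardinal.{u}) ^ ν →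
      #(Mo i) ≤ (2 : Cardinal.{u}) ^ ν := by
    intro i
    induction i using Ordinal.induction with
    | _ i IH =>
      intro hic
      rw [hMo]
      refine le_trans (mk_iUnion_le_sum_mk)
        (le_trans (Cardinal.sum_le_sum _ (fun _ => (2 : Cardinal.{u}) ^ ν) ?_) ?_)
      · intro t
        refine hstepcard _ (IH _ ((Ordinal.ToType.mk (o := i)).symm t).2 ?_)
        exact (Ordinal.card_le_card ((Ordinal.ToType.mk (o := i)).symm t).2.le).trans hic
      · rw [Cardinal.sum_const']
        rw [Cardinal.mk_toType]
        exact (mul_le_mul' hic le_rfl).trans (Cardinal.mul_eq_self hlcinf).le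
  have hMcard : #(Mo ((Order.succ ν).ord)) ≤ (2 : Cardinal.{u}) ^ ν := by
    refine hMocard _ ?_
    rw [Cardinal.card_ord]
    exact Order.succ_le_of_lt (cantor ν)
  -- saturation
  have hsat : ∀ e : ν.ord.ToType → (Order.succ ((2 : Cardinal.{u}) ^ ν)).ord.ToType,
      (∀ i, e i ∈ Mo ((Order.succ ν).ord)) → ∀ b0, ∃ b ∈ Mo ((Order.succ ν).ord),
        TP e b = TP e b0 := by
    intro e he b0
    have hmem : ∀ i : ν.ord.ToType, ∃ o, o < (Order.succ ν).ord ∧ e i ∈ step (Mo o) := by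
      intro i
      have h1 := he i
      rw [hMo] at h1
      obtain ⟨t, ht⟩ := Set.mem_iUnion.mp h1
      exact ⟨_, ((Ordinal.ToType.mk (o := _)).symm t).2, ht⟩
    choose O hO1 hO2 using hmem
    have hlim : Order.IsSuccLimit ((Order.succ ν).ord) := Cardinal.isSuccLimit_ord (hν.trans (Order.le_succ ν))
    have hj : (⨆ i, Order.succ (O i)) < (Order.succ ν).ord := by
      apply Ordinal.iSup_lt_ord
      · rw [(Cardinal.isRegular_succ hν).cof_eq, Cardinal.mk_toType, Cardinal.card_ord]
        exact Order.lt_succ ν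
      · exact fun i => hlim.succ_lt (hO1 i)
    have he' : ∀ i, e i ∈ Mo (⨆ i, Order.succ (O i)) := fun i =>
      hMoMono (Ordinal.le_iSup (fun i => Order.succ (O i)) i)
        (hstepMo (Order.lt_succ (O i)) (hO2 i))
    refine ⟨wfn e b0, ?_, hwfn e b0⟩
    refine hstepMo hj ?_
    rw [hstep]
    exact Set.mem_insert_of_mem _ (Set.mem_union_right _
      (Set.mem_iUnion.2 ⟨⟨e, he'⟩, ⟨b0, rfl⟩⟩))
  have ha₀M : a₀ ∈ Mo ((Order.succ ν).ord) := by
    have h0 : (0 : Ordinal.{u}) < (Order.succ ν).ord := by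
      rw [pos_iff_ne_zero]
      simpa using ((aleph0_pos.trans_le hν).trans_le (Order.le_succ ν)).ne'
    exact hstepMo h0 (Set.mem_insert _ _)
  -- strict upper bound for M
  obtain ⟨astar, hastar⟩ := exists_strict_bound hlcinf (Mo ((Order.succ ν).ord)) hMcard
  -- the recursion
  set Good : (ξ : (Order.succ ν).ord.ToType) →
      ((η : (Order.succ ν).ord.ToType) → η < ξ → (Order.succ ((2 : Cardinal.{u}) ^ ν)).ord.ToType) →
      (Order.succ ((2 : Cardinal.{u}) ^ ν)).ord.ToType → Prop := fun ξ prev b =>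
    b ∈ Mo ((Order.succ ν).ord) ∧ (∀ η (h : η < ξ), prev η h < b) ∧
      ∀ v : Fin (n + 1) → ↥(Set.Iio ξ),
        f (Fin.snoc (fun i => prev (v i).1 (v i).2) b) =
          f (Fin.snoc (fun i => prev (v i).1 (v i).2) astar) with hGooddef
  have hGoodEx : ∀ ξ prev, (∀ η h, prev η h ∈ Mo ((Order.succ ν).ord)) → ∃ b, Good ξ prev b := by
    intro ξ prev hprev
    by_cases hne : Nonempty (↥(Set.Iio ξ))
    · have hcard : #(↥(Set.Iio ξ)) ≤ #ν.ord.ToType := by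
        rw [Cardinal.mk_toType, Cardinal.card_ord]
        exact Order.lt_succ_iff.mp (Cardinal.mk_Iio_toType_ord_lt ξ)
      obtain ⟨emb⟩ := (Cardinal.le_def _ _).1 hcard
      obtain ⟨b, hbM, hTPeq⟩ := hsat
        (fun i => prev (Function.invFun emb i).1 (Function.invFun emb i).2)
        (fun i => hprev _ _) astar
      have hinv : ∀ p : ↥(Set.Iio ξ), Function.invFun emb (emb p) = p :=
        Function.leftInverse_invFun emb.injective
      refine ⟨b, hbM, ?_, ?_⟩
      · intro η h
        have h1 := congrFun (congrArg Prod.snd hTPeq) (emb ⟨η, h⟩)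
        simp only [hTP, hinv] at h1
        have h2 : prev η h < astar := hastar _ (hprev η h)
        exact (decide_eq_decide.mp h1).mpr h2
      · intro v
        have h1 := congrFun (congrArg Prod.fst hTPeq) (fun i => emb (v i))
        simp only [hTP, hinv] at h1
        exact h1
    · refine ⟨a₀, ha₀M, ?_, ?_⟩
      · intro η h
        exact absurd ⟨⟨η, h⟩⟩ hne
      · intro v
        exact absurd ⟨v 0⟩ hne
  set a : (Order.succ ν).ord.ToType → (Order.succ ((2 : Cardinal.{u}) ^ ν)).ord.ToType :=
    (IsWellFounded.wf (α := (Order.succ ν).ord.ToType) (r := (· < ·))).fix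
      (fun ξ prev => if h : ∃ b, Good ξ prev b then h.choose else a₀) with hadef
  have hfix : ∀ ξ, a ξ = if h : ∃ b, Good ξ (fun η _ => a η) b then h.choose else a₀ :=
    fun ξ => WellFounded.fix_eq _ _ ξ
  have hGood : ∀ ξ, Good ξ (fun η _ => a η) (a ξ) := by
    intro ξ
    induction ξ using WellFoundedLT.induction with
    | _ ξ IH =>
      have hex : ∃ b, Good ξ (fun η _ => a η) b :=
        hGoodEx ξ (fun η _ => a η) (fun η h => (IH η h).1)
      rw [hfix ξ, dif_pos hex]
      exact hex.choose_spec
  refine ⟨a, astar, fun η ξ h => (hGood ξ).2.1 η h, fun ξ v => (hGood ξ).2.2 v⟩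

/-- The Erdős–Rado theorem, in canonical sequence form. -/
theorem erdosRadoCanon (μ : Cardinal.{u}) (hμ : ℵ₀ ≤ μ) :
    ∀ (n : ℕ) (C : Type u), #C ≤ μ →
      ∀ f : (Fin (n + 1) → (Order.succ (bethIter μ n)).ord.ToType) → C,
        ∃ g : (Order.succ μ).ord.ToType → (Order.succ (bethIter μ n)).ord.ToType,
          StrictMono g ∧
          ∀ v w : Fin (n + 1) → (Order.succ μ).ord.ToType, StrictMono v → StrictMono w →
            f (g ∘ v) = f (g ∘ w) := by
  intro n
  induction n with
  | zero =>
    intro C hC f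
    have hb0 : bethIter μ 0 = μ := rfl
    have hex : ∃ c : C,
        Order.succ μ ≤ #{t : (Order.succ (bethIter μ 0)).ord.ToType | f (fun _ => t) = c} := by
      by_contra hcon
      push_neg at hcon
      have huniv : (Set.univ : Set ((Order.succ (bethIter μ 0)).ord.ToType)) =
          ⋃ c : C, {t | f (fun _ => t) = c} := by
        ext t
        simp only [Set.mem_univ, Set.mem_iUnion, Set.mem_setOf_eq, true_iff]
        exact ⟨_, rfl⟩
      have h2 : Order.succ μ ≤ μ := by
        calc Order.succ μ = #((Order.succ (bethIter μ 0)).ord.ToType) := by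
              rw [Cardinal.mk_toType, Cardinal.card_ord, hb0]
          _ = #(⋃ c : C, {t | f (fun _ => t) = c}) := by rw [← huniv, Cardinal.mk_univ]
          _ ≤ Cardinal.sum (fun c : C => #{t | f (fun _ => t) = c}) := mk_iUnion_le_sum_mk
          _ ≤ Cardinal.sum (fun _ : C => μ) :=
              Cardinal.sum_le_sum _ _ (fun c => Order.lt_succ_iff.mp (hcon c))
          _ = #C * μ := Cardinal.sum_const' _ _
          _ ≤ μ * μ := mul_le_mul' hC le_rfl
          _ = μ := Cardinal.mul_eq_self hμ
      exact absurd h2 (Order.lt_succ μ).not_ge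
    obtain ⟨c, hc⟩ := hex
    haveI hwo : IsWellOrder ↥{t : (Order.succ (bethIter μ 0)).ord.ToType | f (fun _ => t) = c}
      ((· < ·) : _ → _ → Prop) := isWellOrder_lt
    have hord : (Order.succ μ).ord ≤
        Ordinal.type ((· < ·) : ↥{t : (Order.succ (bethIter μ 0)).ord.ToType |
          f (fun _ => t) = c} → _ → Prop) := by
      refine Cardinal.ord_le.2 ?_
      rw [Ordinal.card_type]
      exact hc
    obtain ⟨g0, hg0⟩ := exists_strictMono_toType hord
    refine ⟨fun t => (g0 t).1, fun u v h => hg0 h, ?_⟩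
    intro v w hv hw
    have h1 : ∀ u : Fin (0 + 1) → (Order.succ μ).ord.ToType,
        f ((fun t => (g0 t).1) ∘ u) = c := by
      intro u
      have h2 : ((fun t => (g0 t).1) ∘ u) = fun _ => (g0 (u 0)).1 :=
        funext fun i => by
          have h3 : i = 0 := Fin.ext (by omega)
          rw [h3]; rfl
      rw [h2]
      exact (g0 (u 0)).2
    rw [h1 v, h1 w]
  | succ m IH =>
    intro C hC f
    have hν : ℵ₀ ≤ bethIter μ m := hμ.trans (le_bethIter μ m)
    have hμν : μ ≤ bethIter μ m := le_bethIter μ m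
    obtain ⟨a, astar, ha, hend⟩ := exists_endHomog μ (bethIter μ m) hμ hν hμν m C hC f
    obtain ⟨h, hh, hhom⟩ := IH C hC (fun v => f (Fin.snoc (fun i => a (v i)) astar))
    refine ⟨a ∘ h, ha.comp hh, ?_⟩
    intro v w hv hw
    have key : ∀ u : Fin (m + 2) → (Order.succ μ).ord.ToType, StrictMono u →
        f ((a ∘ h) ∘ u) = f (Fin.snoc (fun i : Fin (m + 1) => a (h (u i.castSucc))) astar) := by
      intro u hu
      have hdec : ((a ∘ h) ∘ u) = Fin.snoc (fun i : Fin (m + 1) => a (h (u i.castSucc)))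
          (a (h (u (Fin.last (m + 1))))) := by
        funext x
        refine Fin.lastCases ?_ ?_ x
        · simp [Fin.snoc_last]
        · intro i
          simp [Fin.snoc_castSucc]
      refine (congrArg f hdec).trans ?_
      exact hend (h (u (Fin.last (m + 1))))
        (fun i => ⟨h (u i.castSucc), hh (hu (Fin.castSucc_lt_last i))⟩)
    rw [key v hv, key w hw]
    exact hhom (fun i => v i.castSucc) (fun i => w i.castSucc)
      (fun i j hij => hv (Fin.castSucc_lt_castSucc_iff.mpr hij))
      (fun i j hij => hw (Fin.castSucc_lt_castSucc_iff.mpr hij))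

/-- Interleaved pairs inside the `toType` of a successor cardinal's ordinal. -/
theorem exists_pair_embedding (μ : Cardinal.{u}) (hμ : ℵ₀ ≤ μ) :
    ∃ p : Bool → (Order.succ μ).ord.ToType → (Order.succ μ).ord.ToType,
      (∀ j, p false j < p true j) ∧ (∀ j j', j < j' → p true j < p false j') := by
  classical
  have hcard : ∀ (o : Ordinal.{u}), o < (Order.succ μ).ord → ∀ b : Bool,
      2 * o + (cond b 1 0) < (Order.succ μ).ord := by
    intro o ho b
    rw [Cardinal.lt_ord] at ho ⊢
    have h2 : ((2 : Ordinal.{u}) * o + (cond b 1 0)).card ≤ (2 : Cardinal) * o.card + 1 := by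
      rw [Ordinal.card_add, Ordinal.card_mul]
      have h2' : ((2 : Ordinal.{u})).card = 2 := by simp
      rw [h2']
      refine add_le_add le_rfl ?_
      cases b <;> simp
    refine lt_of_le_of_lt h2 ?_
    have h3 : o.card ≤ μ := Order.lt_succ_iff.mp ho
    have h25 : (2 : Cardinal.{u}) ≤ μ := ((Cardinal.nat_lt_aleph0 2).le.trans hμ).trans_eq' (by norm_num)
    have h4 : (2 : Cardinal.{u}) * o.card + 1 ≤ μ := by
      calc (2 : Cardinal.{u}) * o.card + 1 ≤ μ * μ + μ :=
            add_le_add (mul_le_mul' h25 h3) (one_le_aleph0.trans hμ)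
        _ = μ + μ := by rw [Cardinal.mul_eq_self hμ]
        _ = μ := Cardinal.add_eq_self hμ
    exact h4.trans_lt (Order.lt_succ μ)
  set ψ := Ordinal.ToType.mk (o := (Order.succ μ).ord) with hψ
  refine ⟨fun b j => ψ ⟨2 * (ψ.symm j).1 + (cond b 1 0), hcard _ (ψ.symm j).2 b⟩, ?_, ?_⟩
  · intro j
    apply ψ.strictMono
    refine Subtype.mk_lt_mk.2 ?_
    show 2 * (ψ.symm j).1 + 0 < 2 * (ψ.symm j).1 + 1
    rw [add_zero, Ordinal.add_one_eq_succ]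
    exact Order.lt_succ _
  · intro j j' h
    apply ψ.strictMono
    refine Subtype.mk_lt_mk.2 ?_
    show 2 * (ψ.symm j).1 + 1 < 2 * (ψ.symm j').1 + 0
    have ho : (ψ.symm j).1 < (ψ.symm j').1 := ψ.symm.strictMono h
    have h6 : (ψ.symm j).1 + 1 ≤ (ψ.symm j').1 := Order.add_one_le_of_lt ho
    have h7 : (2 : Ordinal.{u}) * ((ψ.symm j).1 + 1) ≤ 2 * (ψ.symm j').1 :=
      mul_le_mul_right h6 2
    rw [mul_add, mul_one] at h7
    rw [add_zero]
    refine lt_of_lt_of_le ?_ h7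
    have h8 : (1 : Ordinal.{u}) < 2 := one_lt_two
    exact add_lt_add_right h8 _


/-- Lemma: if `B` has a sequence `⟨x_i : i < ℶ_{2k}(μ)⁺⟩` such that for all
`i₀ < … < i_{2k-1}` the element `⋀_{l<k} x_{i_{2l}} ∧ (-x_{i_{2l+1}})` is
nonzero, then there is a sequence `⟨y_j : j < μ⁺⟩` in `B` such that for every
`k`-element set `w ⊆ μ⁺` there is an ultrafilter `D` on `B` (here: a bounded
lattice homomorphism `B → Bool`) with `y_j ∈ D ↔ j ∈ w` for all `j < μ⁺`. -/
theorem stmt12 {B : Type u} [BooleanAlgebra B] (k : ℕ) (hk : 1 ≤ k)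
    (μ : Cardinal.{u}) (hμ : ℵ₀ ≤ μ)
    (x : (Order.succ (bethIter μ (2 * k))).ord.ToType → B)
    (hx : ∀ g : Fin (2 * k) → (Order.succ (bethIter μ (2 * k))).ord.ToType,
      StrictMono g →
      (Finset.univ.inf fun l : Fin k =>
        x (g ⟨2 * l.1, by have := l.2; omega⟩) ⊓
          (x (g ⟨2 * l.1 + 1, by have := l.2; omega⟩))ᶜ) ≠ ⊥) :
    ∃ y : (Order.succ μ).ord.ToType → B,
      ∀ w : Finset (Order.succ μ).ord.ToType, w.card = k →
        ∃ f : BoundedLatticeHom B Bool,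
          ∀ j : (Order.succ μ).ord.ToType, f (y j) = true ↔ j ∈ w := by
  classical
  -- the index type is infinite, so there is a strictly monotone `2k`-tuple
  haveI hαinf : Infinite (Order.succ (bethIter μ (2 * k))).ord.ToType := by
    rw [Cardinal.infinite_iff, Cardinal.mk_toType, Cardinal.card_ord]
    exact (hμ.trans (le_bethIter μ (2 * k))).trans (Order.le_succ _)
  obtain ⟨fs, hfscard⟩ := Infinite.exists_subset_card_eq
    ((Order.succ (bethIter μ (2 * k))).ord.ToType) (2 * k)
  have hg2 : StrictMono (fs.orderEmbOfFin hfscard) := (fs.orderEmbOfFin hfscard).strictMono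
  -- B is nontrivial
  have htop : (⊤ : B) ≠ ⊥ := by
    intro h
    refine hx _ hg2 ?_
    have hall : ∀ z : B, z = ⊥ := fun z => le_antisymm (h ▸ le_top) bot_le
    exact hall _
  -- ultrafilters attached to `2k`-tuples
  set P : (Fin (2 * k) → (Order.succ (bethIter μ (2 * k))).ord.ToType) → B := fun s =>
    Finset.univ.inf fun l : Fin k =>
      x (s ⟨2 * l.1, by have := l.2; omega⟩) ⊓
        (x (s ⟨2 * l.1 + 1, by have := l.2; omega⟩))ᶜ with hPdef
  set D : (Fin (2 * k) → (Order.succ (bethIter μ (2 * k))).ord.ToType) →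
      BoundedLatticeHom B Bool := fun s =>
    if h : ∃ D', D' (P s) = true then h.choose else (exists_boolHom ⊤ htop).choose with hDdef
  have hD : ∀ s, StrictMono s → (D s) (P s) = true := by
    intro s hs
    have hex : ∃ D' : BoundedLatticeHom B Bool, D' (P s) = true :=
      exists_boolHom _ (hx s hs)
    rw [hDdef]
    simp only [dif_pos hex]
    exact hex.choose_spec
  -- the coloring
  have hCle : #(ULift.{u} (Fin (2 * k + 1) → Bool)) ≤ μ :=
    (Cardinal.lt_aleph0_of_finite _).le.trans hμ
  obtain ⟨g, hg, hhom⟩ := erdosRadoCanon μ hμ (2 * k) (ULift.{u} (Fin (2 * k + 1) → Bool)) hCle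
    (fun t => ULift.up (fun m : Fin (2 * k + 1) => (D (fun i => t (delFun m i))) (x (t m))))
  -- interleaved pairs
  obtain ⟨p, hp01, hp10⟩ := exists_pair_embedding μ hμ
  have pmono : ∀ (b b' : Bool) (u u' : (Order.succ μ).ord.ToType), u < u' → p b u < p b' u' := by
    intro b b' u u' h
    have h1 : p b u < p false u' := by
      cases b
      · exact (hp01 u).trans (hp10 u u' h)
      · exact hp10 u u' h
    cases b'
    · exact h1
    · exact h1.trans (hp01 u')
  set y : (Order.succ μ).ord.ToType → B := fun j => x (g (p false j)) ⊓ (x (g (p true j)))ᶜ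
    with hydef
  refine ⟨y, ?_⟩
  intro w hw
  set σ := w.orderEmbOfFin hw with hσdef
  have hσlt : ∀ (a b : ℕ) (ha : a < k) (hb : b < k), a < b → σ ⟨a, ha⟩ < σ ⟨b, hb⟩ :=
    fun a b ha hb h => σ.strictMono h
  set q : Fin (2 * k) → (Order.succ μ).ord.ToType := fun i =>
    if i.1 % 2 = 0 then p false (σ ⟨i.1 / 2, by omega⟩) else p true (σ ⟨i.1 / 2, by omega⟩)
    with hqdef
  have hq : StrictMono q := by
    intro i j hij
    have hij' : i.1 < j.1 := hij
    simp only [hqdef]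
    by_cases h1 : i.1 % 2 = 0 <;> by_cases h2 : j.1 % 2 = 0 <;>
      simp only [h1, h2, if_true, if_false, ite_true, ite_false]
    · exact pmono _ _ _ _ (hσlt _ _ _ _ (by omega))
    · by_cases hh : i.1 / 2 = j.1 / 2
      · have h3 : (⟨i.1 / 2, by omega⟩ : Fin k) = ⟨j.1 / 2, by omega⟩ := Fin.ext hh
        rw [h3]
        exact hp01 _
      · exact pmono _ _ _ _ (hσlt _ _ _ _ (by omega))
    · exact pmono _ _ _ _ (hσlt _ _ _ _ (by omega))
    · exact pmono _ _ _ _ (hσlt _ _ _ _ (by omega))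
  have hs : StrictMono (fun i => g (q i)) := fun i j hij => hg (hq hij)
  refine ⟨D (fun i => g (q i)), ?_⟩
  intro j
  by_cases hjw : j ∈ w
  · simp only [hjw, iff_true]
    have hjr : j ∈ Set.range σ := by
      rw [hσdef, Finset.range_orderEmbOfFin]
      exact hjw
    obtain ⟨l, hl⟩ := hjr
    have he0 : q ⟨2 * l.1, by have := l.2; omega⟩ = p false j := by
      simp only [hqdef]
      rw [if_pos (by simp [Nat.mul_mod_right])]
      have h3 : (⟨(2 * l.1) / 2, by omega⟩ : Fin k) = l :=
        Fin.ext (show (2 * l.1) / 2 = l.1 by omega)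
      rw [h3, hl]
    have he1 : q ⟨2 * l.1 + 1, by have := l.2; omega⟩ = p true j := by
      simp only [hqdef]
      rw [if_neg (by omega)]
      have h3 : (⟨(2 * l.1 + 1) / 2, by omega⟩ : Fin k) = l :=
        Fin.ext (show (2 * l.1 + 1) / 2 = l.1 by omega)
      rw [h3, hl]
    have hle : P (fun i => g (q i)) ≤ y j := by
      refine le_trans (Finset.inf_le (Finset.mem_univ l)) ?_
      rw [hydef]
      simp only
      rw [he0, he1]
    exact boolHom_mono _ hle (hD _ hs)
  · simp only [hjw, iff_false]
    have hlnej : ∀ (a : ℕ) (ha : a < k), σ ⟨a, ha⟩ ≠ j := by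
      intro a ha h
      exact hjw (h ▸ Finset.orderEmbOfFin_mem w hw ⟨a, ha⟩)
    have hmem : ∀ (b : Bool) (u), u < j → p b u < p false j ∧ p b u < p true j := by
      intro b u h
      have h1 : p b u < p false j := by
        cases b
        · exact (hp01 u).trans (hp10 u j h)
        · exact hp10 u j h
      exact ⟨h1, h1.trans (hp01 j)⟩
    have hmem' : ∀ (b : Bool) (u), j < u → p true j < p b u ∧ p false j < p b u := by
      intro b u h
      have h1 : p true j < p b u := by
        cases b
        · exact hp10 j u h
        · exact (hp10 j u h).trans (hp01 u)
      exact ⟨h1, (hp01 j).trans h1⟩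
    have hsep : ∀ i : Fin (2 * k),
        (q i < p false j ∧ q i < p true j) ∨ (p true j < q i ∧ p false j < q i) := by
      intro i
      simp only [hqdef]
      rcases lt_or_gt_of_ne (hlnej (i.1 / 2) (by omega)) with h | h
      · left
        split_ifs with hpar
        · exact hmem false _ h
        · exact hmem true _ h
      · right
        split_ifs with hpar
        · exact hmem' false _ h
        · exact hmem' true _ h
    have hdc : ∀ i i' : Fin (2 * k), i.1 ≤ i'.1 → q i' < p false j → q i < p false j := by
      intro i i' hle hlt
      exact lt_of_le_of_lt (hq.monotone (show i ≤ i' from hle)) hlt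
    have hm₀lt : (Finset.univ.filter (fun i : Fin (2 * k) => q i < p false j)).card < 2 * k + 1 := by
      have h4 := Finset.card_filter_le Finset.univ (fun i : Fin (2 * k) => q i < p false j)
      simp only [Finset.card_univ, Fintype.card_fin] at h4
      omega
    have hm₀ : ∀ i : Fin (2 * k), q i < p false j ↔
        i.1 < ((⟨_, hm₀lt⟩ : Fin (2 * k + 1))).1 :=
      fun i => downclosed_card _ hdc i
    have hm₀' : ∀ i : Fin (2 * k), q i < p true j ↔
        i.1 < ((⟨_, hm₀lt⟩ : Fin (2 * k + 1))).1 := by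
      intro i
      have h5 : (q i < p true j) ↔ (q i < p false j) := by
        rcases hsep i with ⟨h1, h2⟩ | ⟨h1, h2⟩
        · exact iff_of_true h2 h1
        · exact iff_of_false (asymm h1) (asymm h2)
      exact h5.trans (hm₀ i)
    have hne0 : ∀ i, q i ≠ p false j := by
      intro i
      rcases hsep i with ⟨h1, _⟩ | ⟨_, h2⟩
      exacts [ne_of_lt h1, ne_of_gt h2]
    have hne1 : ∀ i, q i ≠ p true j := by
      intro i
      rcases hsep i with ⟨_, h1⟩ | ⟨h1, _⟩
      exacts [ne_of_lt h1, ne_of_gt h1]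
    have hv0 : StrictMono (insFun (⟨_, hm₀lt⟩ : Fin (2 * k + 1)) (p false j) q) :=
      insFun_strictMono hq hm₀ hne0
    have hv1 : StrictMono (insFun (⟨_, hm₀lt⟩ : Fin (2 * k + 1)) (p true j) q) :=
      insFun_strictMono hq hm₀' hne1
    have key : (D (fun i => g (insFun (⟨_, hm₀lt⟩ : Fin (2 * k + 1)) (p false j) q
          (delFun ⟨_, hm₀lt⟩ i))))
        (x (g (insFun (⟨_, hm₀lt⟩ : Fin (2 * k + 1)) (p false j) q ⟨_, hm₀lt⟩))) =
        (D (fun i => g (insFun (⟨_, hm₀lt⟩ : Fin (2 * k + 1)) (p true j) q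
          (delFun ⟨_, hm₀lt⟩ i))))
        (x (g (insFun (⟨_, hm₀lt⟩ : Fin (2 * k + 1)) (p true j) q ⟨_, hm₀lt⟩))) :=
      congrFun (congrArg ULift.down
        (hhom (insFun ⟨_, hm₀lt⟩ (p false j) q) (insFun ⟨_, hm₀lt⟩ (p true j) q) hv0 hv1))
        ⟨_, hm₀lt⟩
    have hre : ∀ z, (fun i => g (insFun (⟨_, hm₀lt⟩ : Fin (2 * k + 1)) z q
        (delFun ⟨_, hm₀lt⟩ i))) = fun i => g (q i) :=
      fun z => funext fun i => by rw [insFun_delFun']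
    rw [hre, hre, insFun_same, insFun_same] at key
    have hyval : (D (fun i => g (q i))) (y j) =
        ((D (fun i => g (q i))) (x (g (p false j))) &&
          !((D (fun i => g (q i))) (x (g (p true j))))) := by
      rw [hydef]
      simp only
      have hminf : (D (fun i => g (q i))) (x (g (p false j)) ⊓ (x (g (p true j)))ᶜ) =
          (D (fun i => g (q i))) (x (g (p false j))) ⊓
            (D (fun i => g (q i))) ((x (g (p true j)))ᶜ) := map_inf _ _ _
      rw [hminf, boolHom_compl]
      rfl
    rw [hyval, ← key]
    cases hb : (D (fun i => g (q i))) (x (g (p false j))) <;> simp [hb]
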